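/- Let w be a weight on ℝ^n satisfying the growth condition w(S)/w(Q) ≤ 2 (|S|/|Q|)^{1/β} for all cubes Q and measurable S ⊆ Q, where β > 1, and suppose w has doubling constant Δ_w. If {Q_j}_{j=0}^N is a satellite configuration of cubes with center Q_0, then for all δ ∈ (0,1), w((∪_j (1+δ)Q_j) \ (∪_j Q_j)) ≤ C_n Δ_w^2 δ^{1/β} w(Q_0), with C_n depending only on n. -/

import Mathlib

open MeasureTheory Metric Set
open scoped ENNReal

/-- The measure `w dx` associated to a weight `w` on ℝⁿ. -/
noncomputable def weightMeasure (n : ℕ) (w : (Fin n → ℝ) → ℝ≥0∞) : Measure (Fin n → ℝ) :=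
  MeasureTheory.volume.withDensity w

private lemma finset_subset_biUnion {α β : Type*} (Q : Finset α) (f : α → Set β) {u : α}
    (hu : u ∈ Q) : f u ⊆ ⋃ v ∈ Q, f v :=
  fun x hx => Set.mem_iUnion₂.mpr ⟨u, hu, hx⟩

private lemma Icc_union_Icc_overlap {a b c d : ℝ} (hab : a ≤ b) (hcd : c ≤ d)
    (h : (Icc a b ∩ Icc c d).Nonempty) :
    Icc a b ∪ Icc c d = Icc (min a c) (max b d) := by
  obtain ⟨z, ⟨hz1, hz2⟩, hz3, hz4⟩ := h
  ext x
  simp only [mem_union, mem_Icc]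
  constructor
  · rintro (⟨h1, h2⟩ | ⟨h1, h2⟩)
    · exact ⟨le_trans (min_le_left _ _) h1, le_trans h2 (le_max_left _ _)⟩
    · exact ⟨le_trans (min_le_right _ _) h1, le_trans h2 (le_max_right _ _)⟩
  · rintro ⟨h1, h2⟩
    rcases lt_or_ge x a with hxa | hxa
    · -- x < a : use interval [c,d]
      have hc : c ≤ x := by
        rcases min_cases a c with ⟨he, _⟩ | ⟨he, hle⟩
        · linarith [h1, he]
        · linarith [h1, he]
      exact Or.inr ⟨hc, by linarith⟩
    · rcases le_or_gt x b with hxb | hxb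
      · exact Or.inl ⟨hxa, hxb⟩
      · have hd : x ≤ d := by
          rcases max_cases b d with ⟨he, hle⟩ | ⟨he, _⟩
          · linarith [h2, he]
          · linarith [h2, he]
        exact Or.inr ⟨by linarith, hd⟩

/-- 1D enlargement lemma: enlarging each interval of a finite family of closed intervals by
the factor `(1+2κ)` about its center adds measure at most `2κ` times the measure of the union. -/
private lemma one_dim_enlarge (κ : ℝ) (hκ : 0 ≤ κ) :
    ∀ (n : ℕ) (P : Finset (ℝ × ℝ)), P.card ≤ n → (∀ p ∈ P, p.1 ≤ p.2) →
    volume ((⋃ p ∈ P, Icc (p.1 - κ * (p.2 - p.1)) (p.2 + κ * (p.2 - p.1))) \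
        ⋃ p ∈ P, Icc p.1 p.2)
      ≤ ENNReal.ofReal (2 * κ) * volume (⋃ p ∈ P, Icc p.1 p.2) := by
  intro n
  induction n with
  | zero =>
    intro P hcard _
    have : P = ∅ := Finset.card_eq_zero.mp (Nat.le_zero.mp hcard)
    subst this
    simp
  | succ n ih =>
    intro P hcard hP
    classical
    by_cases hdisj : ∀ p ∈ P, ∀ q ∈ P, p ≠ q → Disjoint (Icc p.1 p.2) (Icc q.1 q.2)
    · -- disjoint case
      have hsub : (⋃ p ∈ P, Icc (p.1 - κ * (p.2 - p.1)) (p.2 + κ * (p.2 - p.1))) \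
          (⋃ p ∈ P, Icc p.1 p.2) ⊆
          ⋃ p ∈ P, (Icc (p.1 - κ * (p.2 - p.1)) p.1 ∪ Icc p.2 (p.2 + κ * (p.2 - p.1))) := by
        rintro x ⟨hx1, hx2⟩
        obtain ⟨p, hp, hxp⟩ := Set.mem_iUnion₂.mp hx1
        obtain ⟨hxp1, hxp2⟩ := mem_Icc.mp hxp
        refine Set.mem_iUnion₂.mpr ⟨p, hp, ?_⟩
        have hnot : ¬ (p.1 ≤ x ∧ x ≤ p.2) := by
          intro hc
          exact hx2 (finset_subset_biUnion P (fun p => Icc p.1 p.2) hp (mem_Icc.mpr hc))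
        rcases le_total x p.1 with h | h
        · exact mem_union_left _ (mem_Icc.mpr ⟨hxp1, h⟩)
        · rcases le_total p.2 x with h' | h'
          · exact mem_union_right _ (mem_Icc.mpr ⟨h', hxp2⟩)
          · exact absurd ⟨h, h'⟩ hnot
      calc volume ((⋃ p ∈ P, Icc (p.1 - κ * (p.2 - p.1)) (p.2 + κ * (p.2 - p.1))) \
              ⋃ p ∈ P, Icc p.1 p.2)
          ≤ ∑ p ∈ P, volume ((Icc (p.1 - κ * (p.2 - p.1)) p.1 ∪ Icc p.2 (p.2 + κ * (p.2 - p.1)))) :=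
            le_trans (measure_mono hsub) (measure_biUnion_finset_le P _)
        _ ≤ ∑ p ∈ P, ENNReal.ofReal (2 * κ) * volume (Icc p.1 p.2) := by
            refine Finset.sum_le_sum fun p hp => ?_
            have hle : p.1 ≤ p.2 := hP p hp
            have hnn : (0:ℝ) ≤ κ * (p.2 - p.1) := mul_nonneg hκ (by linarith)
            calc volume ((Icc (p.1 - κ * (p.2 - p.1)) p.1 ∪ Icc p.2 (p.2 + κ * (p.2 - p.1))))
                ≤ volume (Icc (p.1 - κ * (p.2 - p.1)) p.1) +
                    volume (Icc p.2 (p.2 + κ * (p.2 - p.1))) := measure_union_le _ _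
              _ = ENNReal.ofReal (κ * (p.2 - p.1)) + ENNReal.ofReal (κ * (p.2 - p.1)) := by
                  rw [Real.volume_Icc, Real.volume_Icc]
                  ring_nf
              _ ≤ ENNReal.ofReal (2 * κ) * volume (Icc p.1 p.2) := by
                  rw [Real.volume_Icc, ← ENNReal.ofReal_add hnn hnn,
                    ← ENNReal.ofReal_mul (by linarith)]
                  apply ENNReal.ofReal_le_ofReal
                  nlinarith
        _ = ENNReal.ofReal (2 * κ) * ∑ p ∈ P, volume (Icc p.1 p.2) := by
            rw [Finset.mul_sum]
        _ = ENNReal.ofReal (2 * κ) * volume (⋃ p ∈ P, Icc p.1 p.2) := by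
            rw [measure_biUnion_finset hdisj (fun p _ => measurableSet_Icc)]
    · -- merge case
      push_neg at hdisj
      obtain ⟨p, hp, q, hq, hpq, hnd⟩ := hdisj
      have hover : (Icc p.1 p.2 ∩ Icc q.1 q.2).Nonempty := not_disjoint_iff_nonempty_inter.mp hnd
      set mrg : ℝ × ℝ := (min p.1 q.1, max p.2 q.2) with hmrg
      set P' : Finset (ℝ × ℝ) := insert mrg ((P.erase p).erase q) with hP'def
      have hqmem : q ∈ P.erase p := Finset.mem_erase.mpr ⟨Ne.symm hpq, hq⟩
      have hcard' : P'.card ≤ n := by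
        have h1 : ((P.erase p).erase q).card = P.card - 2 := by
          rw [Finset.card_erase_of_mem hqmem, Finset.card_erase_of_mem hp]
          omega
        have h2 : 2 ≤ P.card := by
          have hss : ({p, q} : Finset (ℝ × ℝ)) ⊆ P := by
            intro u hu
            simp only [Finset.mem_insert, Finset.mem_singleton] at hu
            rcases hu with rfl | rfl <;> assumption
          calc 2 = ({p, q} : Finset (ℝ × ℝ)).card := by
                    rw [Finset.card_insert_of_notMem (by simpa using hpq), Finset.card_singleton]
            _ ≤ P.card := Finset.card_le_card hss
        calc P'.card ≤ ((P.erase p).erase q).card + 1 := Finset.card_insert_le _ _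
          _ = P.card - 2 + 1 := by rw [h1]
          _ ≤ n := by omega
      have hP' : ∀ u ∈ P', u.1 ≤ u.2 := by
        intro u hu
        rcases Finset.mem_insert.mp hu with rfl | hu'
        · exact le_trans (le_trans (min_le_left _ _) (hP p hp)) (le_max_left _ _)
        · exact hP u (Finset.mem_of_mem_erase (Finset.mem_of_mem_erase hu'))
      have hmem_sub : ∀ u ∈ (P.erase p).erase q, u ∈ P := fun u hu =>
        Finset.mem_of_mem_erase (Finset.mem_of_mem_erase hu)
      have hmrg_mem : mrg ∈ P' := Finset.mem_insert_self _ _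
      -- unions of small intervals agree
      have hunion : (⋃ u ∈ P', Icc u.1 u.2) = ⋃ u ∈ P, Icc u.1 u.2 := by
        apply Set.Subset.antisymm
        · refine Set.iUnion₂_subset fun u hu => ?_
          rcases Finset.mem_insert.mp hu with rfl | hu'
          · rw [show Icc (min p.1 q.1) (max p.2 q.2) = Icc p.1 p.2 ∪ Icc q.1 q.2 from
              (Icc_union_Icc_overlap (hP p hp) (hP q hq) hover).symm]
            exact Set.union_subset (finset_subset_biUnion P (fun u => Icc u.1 u.2) hp)
              (finset_subset_biUnion P (fun u => Icc u.1 u.2) hq)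
          · exact finset_subset_biUnion P (fun u => Icc u.1 u.2) (hmem_sub u hu')
        · refine Set.iUnion₂_subset fun u hu => ?_
          by_cases hup : u = p
          · subst hup
            refine Set.Subset.trans (Set.Icc_subset_Icc (min_le_left _ _) (le_max_left _ _))
              (finset_subset_biUnion P' (fun u => Icc u.1 u.2) hmrg_mem)
          · by_cases huq : u = q
            · subst huq
              refine Set.Subset.trans (Set.Icc_subset_Icc (min_le_right _ _) (le_max_right _ _))
                (finset_subset_biUnion P' (fun u => Icc u.1 u.2) hmrg_mem)
            · refine finset_subset_biUnion P' (fun u => Icc u.1 u.2)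
                (Finset.mem_insert_of_mem (Finset.mem_erase.mpr ⟨huq, Finset.mem_erase.mpr ⟨hup, hu⟩⟩))
      -- unions of big intervals: P's is contained in P''s
      have hbig : (⋃ u ∈ P, Icc (u.1 - κ * (u.2 - u.1)) (u.2 + κ * (u.2 - u.1))) ⊆
          ⋃ u ∈ P', Icc (u.1 - κ * (u.2 - u.1)) (u.2 + κ * (u.2 - u.1)) := by
        refine Set.iUnion₂_subset fun u hu => ?_
        have hmono : ∀ v : ℝ × ℝ, v ∈ P' → v.1 ≤ u.1 → u.2 ≤ v.2 →
            Icc (u.1 - κ * (u.2 - u.1)) (u.2 + κ * (u.2 - u.1)) ⊆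
              ⋃ w ∈ P', Icc (w.1 - κ * (w.2 - w.1)) (w.2 + κ * (w.2 - w.1)) := by
          intro v hv hv1 hv2
          refine Set.Subset.trans (Set.Icc_subset_Icc ?_ ?_)
            (finset_subset_biUnion P'
              (fun w => Icc (w.1 - κ * (w.2 - w.1)) (w.2 + κ * (w.2 - w.1))) hv) <;>
            nlinarith [hκ]
        by_cases hup : u = p
        · subst hup
          exact hmono mrg hmrg_mem (min_le_left _ _) (le_max_left _ _)
        · by_cases huq : u = q
          · subst huq
            exact hmono mrg hmrg_mem (min_le_right _ _) (le_max_right _ _)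
          · exact finset_subset_biUnion P'
              (fun w => Icc (w.1 - κ * (w.2 - w.1)) (w.2 + κ * (w.2 - w.1)))
              (Finset.mem_insert_of_mem (Finset.mem_erase.mpr ⟨huq, Finset.mem_erase.mpr ⟨hup, hu⟩⟩))
      calc volume ((⋃ u ∈ P, Icc (u.1 - κ * (u.2 - u.1)) (u.2 + κ * (u.2 - u.1))) \
              ⋃ u ∈ P, Icc u.1 u.2)
          ≤ volume ((⋃ u ∈ P', Icc (u.1 - κ * (u.2 - u.1)) (u.2 + κ * (u.2 - u.1))) \
              ⋃ u ∈ P', Icc u.1 u.2) := by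
            rw [hunion]
            exact measure_mono (Set.diff_subset_diff_left hbig)
        _ ≤ ENNReal.ofReal (2 * κ) * volume (⋃ u ∈ P', Icc u.1 u.2) := ih P' hcard' hP'
        _ = ENNReal.ofReal (2 * κ) * volume (⋃ u ∈ P, Icc u.1 u.2) := by rw [hunion]

private def cube {n : ℕ} (c : Fin n → ℝ) (ρ : Fin n → ℝ) : Set (Fin n → ℝ) :=
  {x | ∀ l, x l ∈ Icc (c l - ρ l) (c l + ρ l)}

private lemma cube_measurableSet {n : ℕ} (c ρ : Fin n → ℝ) : MeasurableSet (cube c ρ) := by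
  have : cube c ρ = ⋂ l, (fun x : Fin n → ℝ => x l) ⁻¹' Icc (c l - ρ l) (c l + ρ l) := by
    ext x; simp [cube, Set.mem_iInter]
  rw [this]
  exact MeasurableSet.iInter fun l => (measurable_pi_apply l) measurableSet_Icc

private lemma cube_eq_closedBall {n : ℕ} (c : Fin n → ℝ) (R : ℝ) (hR : 0 ≤ R) :
    cube c (fun _ => R) = closedBall c R := by
  ext x
  rw [mem_closedBall, dist_pi_le_iff hR]
  constructor
  · intro h l
    obtain ⟨h1, h2⟩ := mem_Icc.mp (h l)
    rw [Real.dist_eq, abs_le]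
    constructor <;> linarith
  · intro h l
    have := abs_le.mp ((Real.dist_eq (x l) (c l)) ▸ h l)
    exact mem_Icc.mpr ⟨by linarith [this.1], by linarith [this.2]⟩

private lemma biUnion_finset_image {α β γ : Type*} [DecidableEq β] (s : Finset α) (f : α → β)
    (g : β → Set γ) : ⋃ p ∈ s.image f, g p = ⋃ j ∈ s, g (f j) := by
  ext x
  simp only [Set.mem_iUnion₂, Finset.mem_image]
  constructor
  · rintro ⟨p, ⟨j, hj, rfl⟩, hx⟩; exact ⟨j, hj, hx⟩
  · rintro ⟨j, hj, hx⟩; exact ⟨f j, ⟨j, hj, rfl⟩, hx⟩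

private lemma biUnion_ite_filter {α γ : Type*} (s : Finset α) (p : α → Prop) [DecidablePred p]
    (g : α → Set γ) :
    (⋃ j ∈ s, (if p j then g j else ∅)) = ⋃ j ∈ s.filter p, g j := by
  ext x
  simp only [Set.mem_iUnion₂, Finset.mem_filter]
  constructor
  · rintro ⟨j, hj, hx⟩
    by_cases h : p j
    · rw [if_pos h] at hx; exact ⟨j, ⟨hj, h⟩, hx⟩
    · rw [if_neg h] at hx; exact absurd hx (Set.notMem_empty x)
  · rintro ⟨j, ⟨hj, h⟩, hx⟩
    exact ⟨j, hj, by rw [if_pos h]; exact hx⟩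

private lemma cube_slice {m : ℕ} (i : Fin (m+1)) (c ρ : Fin (m+1) → ℝ) (y : Fin m → ℝ) :
    (fun t => i.insertNth t y) ⁻¹' cube c ρ =
      if (∀ l', y l' ∈ Icc (c (i.succAbove l') - ρ (i.succAbove l'))
          (c (i.succAbove l') + ρ (i.succAbove l'))) then Icc (c i - ρ i) (c i + ρ i) else ∅ := by
  classical
  ext t
  simp only [Set.mem_preimage, cube, Set.mem_setOf_eq]
  rw [Fin.forall_iff_succAbove i]
  simp only [Fin.insertNth_apply_same, Fin.insertNth_apply_succAbove]
  by_cases h : (∀ l', y l' ∈ Icc (c (i.succAbove l') - ρ (i.succAbove l'))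
      (c (i.succAbove l') + ρ (i.succAbove l')))
  · rw [if_pos h]
    exact ⟨fun hh => hh.1, fun h1 => ⟨h1, h⟩⟩
  · rw [if_neg h]
    exact ⟨fun hh => absurd hh.2 h, fun hx => absurd hx (Set.notMem_empty t)⟩

private lemma volume_eq_lintegral_slice {m : ℕ} (i : Fin (m+1)) (S : Set (Fin (m+1) → ℝ))
    (hS : MeasurableSet S) :
    volume S = ∫⁻ y : Fin m → ℝ, volume ((fun t => i.insertNth t y) ⁻¹' S) := by
  have hvp := volume_preserving_piFinSuccAbove (fun _ : Fin (m+1) => ℝ) i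
  set e := MeasurableEquiv.piFinSuccAbove (fun _ : Fin (m+1) => ℝ) i with he
  have h1 : volume S = volume (e.symm ⁻¹' S) :=
    ((hvp.symm e).measure_preimage_equiv S).symm
  rw [h1, MeasureTheory.Measure.volume_eq_prod,
    MeasureTheory.Measure.prod_apply_symm (e.symm.measurable hS)]
  rfl

private lemma dilate_one_coord {m : ℕ} (δ : ℝ) (hδ0 : 0 < δ) (i : Fin (m+1)) (T : Finset ℕ)
    (c : ℕ → Fin (m+1) → ℝ) (ρ : ℕ → Fin (m+1) → ℝ) (hρ : ∀ j ∈ T, ∀ l, 0 ≤ ρ j l) :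
    volume ((⋃ j ∈ T, cube (c j) (Function.update (ρ j) i ((1+δ) * ρ j i))) \
        ⋃ j ∈ T, cube (c j) (ρ j))
      ≤ ENNReal.ofReal δ * volume (⋃ j ∈ T, cube (c j) (ρ j)) := by
  classical
  set U : Set (Fin (m+1) → ℝ) := ⋃ j ∈ T, cube (c j) (ρ j) with hU
  set U' : Set (Fin (m+1) → ℝ) :=
    ⋃ j ∈ T, cube (c j) (Function.update (ρ j) i ((1+δ) * ρ j i)) with hU'
  have hUm : MeasurableSet U :=
    MeasurableSet.biUnion T.countable_toSet (fun j _ => cube_measurableSet _ _)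
  have hU'm : MeasurableSet U' :=
    MeasurableSet.biUnion T.countable_toSet (fun j _ => cube_measurableSet _ _)
  have hupd2 : ∀ j (l' : Fin m),
      Function.update (ρ j) i ((1+δ) * ρ j i) (i.succAbove l') = ρ j (i.succAbove l') :=
    fun j l' => Function.update_of_ne (Fin.succAbove_ne i l') _ _
  have hslice : ∀ y : Fin m → ℝ,
      volume ((fun t => i.insertNth t y) ⁻¹' U' \ (fun t => i.insertNth t y) ⁻¹' U)
        ≤ ENNReal.ofReal δ * volume ((fun t => i.insertNth t y) ⁻¹' U) := by
    intro y
    set Q : ℕ → Prop := fun j => ∀ l', y l' ∈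
      Icc (c j (i.succAbove l') - ρ j (i.succAbove l'))
          (c j (i.succAbove l') + ρ j (i.succAbove l')) with hQ
    set F : Finset ℕ := T.filter Q with hF
    have hFT : ∀ j ∈ F, j ∈ T := fun j hj => (Finset.mem_filter.mp hj).1
    have hpreU : (fun t => i.insertNth t y) ⁻¹' U
        = ⋃ j ∈ F, Icc (c j i - ρ j i) (c j i + ρ j i) := by
      rw [hU, Set.preimage_iUnion₂, ← biUnion_ite_filter T Q
        (fun j => Icc (c j i - ρ j i) (c j i + ρ j i))]
      exact Set.iUnion₂_congr (fun j _ => cube_slice i (c j) (ρ j) y)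
    have hpreU' : (fun t => i.insertNth t y) ⁻¹' U'
        = ⋃ j ∈ F, Icc (c j i - (1+δ) * ρ j i) (c j i + (1+δ) * ρ j i) := by
      rw [hU', Set.preimage_iUnion₂, ← biUnion_ite_filter T Q
        (fun j => Icc (c j i - (1+δ) * ρ j i) (c j i + (1+δ) * ρ j i))]
      refine Set.iUnion₂_congr (fun j _ => ?_)
      rw [cube_slice i (c j) _ y]
      simp only [hupd2, Function.update_self]
      exact if_congr Iff.rfl rfl rfl
    -- apply the 1D lemma
    set P : Finset (ℝ × ℝ) := F.image (fun j => (c j i - ρ j i, c j i + ρ j i)) with hP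
    have hPpairs : ∀ p ∈ P, p.1 ≤ p.2 := by
      intro p hp
      obtain ⟨j, hj, rfl⟩ := Finset.mem_image.mp hp
      have := hρ j (hFT j hj) i
      simp only
      linarith
    have happ := one_dim_enlarge (δ/2) (by linarith) P.card P le_rfl hPpairs
    rw [hP, biUnion_finset_image F (fun j => (c j i - ρ j i, c j i + ρ j i))
        (fun p => Icc (p.1 - δ/2 * (p.2 - p.1)) (p.2 + δ/2 * (p.2 - p.1))),
      biUnion_finset_image F (fun j => (c j i - ρ j i, c j i + ρ j i))
        (fun p => Icc p.1 p.2)] at happ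
    simp only at happ
    have hend1 : ∀ j : ℕ, c j i - ρ j i - δ/2 * ((c j i + ρ j i) - (c j i - ρ j i))
        = c j i - (1+δ) * ρ j i := fun j => by ring
    have hend2 : ∀ j : ℕ, c j i + ρ j i + δ/2 * ((c j i + ρ j i) - (c j i - ρ j i))
        = c j i + (1+δ) * ρ j i := fun j => by ring
    rw [show (2 : ℝ) * (δ/2) = δ from by ring] at happ
    simp only [hend1, hend2] at happ
    rw [hpreU, hpreU']
    exact happ
  calc volume (U' \ U)
      = ∫⁻ y, volume ((fun t => i.insertNth t y) ⁻¹' (U' \ U)) :=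
        volume_eq_lintegral_slice i _ (hU'm.diff hUm)
    _ = ∫⁻ y, volume ((fun t => i.insertNth t y) ⁻¹' U' \ (fun t => i.insertNth t y) ⁻¹' U) := by
        simp only [Set.preimage_diff]
    _ ≤ ∫⁻ y, ENNReal.ofReal δ * volume ((fun t => i.insertNth t y) ⁻¹' U) :=
        lintegral_mono hslice
    _ = ENNReal.ofReal δ * ∫⁻ y, volume ((fun t => i.insertNth t y) ⁻¹' U) :=
        lintegral_const_mul' _ _ ENNReal.ofReal_ne_top
    _ = ENNReal.ofReal δ * volume U := by rw [← volume_eq_lintegral_slice i U hUm]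

private lemma lebesgue_satellite {m : ℕ} (N : ℕ) (c : ℕ → (Fin (m+1) → ℝ)) (r : ℕ → ℝ) (δ : ℝ)
    (hδ0 : 0 < δ) (hδ1 : δ < 1) (hr : ∀ j ≤ N, 0 < r j)
    (hsat : ∀ j ≤ N, (closedBall (c j) (r j) ∩ closedBall (c 0) (r 0)).Nonempty ∧ r j ≤ r 0) :
    volume ((⋃ j ∈ Finset.range (N+1), closedBall (c j) ((1 + δ) * r j)) \
        ⋃ j ∈ Finset.range (N+1), closedBall (c j) (r j)) ≤
      ENNReal.ofReal ((m+1 : ℝ) * δ) * volume (closedBall (c 0) (4 * r 0)) := by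
  classical
  set rad : ℕ → ℕ → Fin (m+1) → ℝ :=
    fun k j l => if (l : ℕ) < k then (1+δ) * r j else r j with hrad
  set V : ℕ → Set (Fin (m+1) → ℝ) :=
    fun k => ⋃ j ∈ Finset.range (N+1), cube (c j) (rad k j) with hV
  have hmem : ∀ j ∈ Finset.range (N+1), j ≤ N :=
    fun j hj => Nat.lt_succ_iff.mp (Finset.mem_range.mp hj)
  have hrpos : ∀ j ∈ Finset.range (N+1), 0 < r j := fun j hj => hr j (hmem j hj)
  have hradnn : ∀ k, ∀ j ∈ Finset.range (N+1), ∀ l, 0 ≤ rad k j l := by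
    intro k j hj l
    have := hrpos j hj
    simp only [hrad]
    split_ifs <;> nlinarith
  have hradle : ∀ k, ∀ j ∈ Finset.range (N+1), ∀ l, rad k j l ≤ (1+δ) * r j := by
    intro k j hj l
    have := hrpos j hj
    simp only [hrad]
    split_ifs <;> nlinarith
  have hV0 : V 0 = ⋃ j ∈ Finset.range (N+1), closedBall (c j) (r j) := by
    refine Set.iUnion₂_congr fun j hj => ?_
    have h1 : rad 0 j = fun _ => r j := funext fun l => if_neg (Nat.not_lt_zero _)
    rw [h1, cube_eq_closedBall _ _ (hrpos j hj).le]
  have hVn : V (m+1) = ⋃ j ∈ Finset.range (N+1), closedBall (c j) ((1 + δ) * r j) := by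
    refine Set.iUnion₂_congr fun j hj => ?_
    have h1 : rad (m+1) j = fun _ => (1+δ) * r j := funext fun l => if_pos l.isLt
    rw [h1, cube_eq_closedBall _ _ (by nlinarith [hrpos j hj])]
  have hdist0 : ∀ j ∈ Finset.range (N+1), dist (c j) (c 0) ≤ r j + r 0 := by
    intro j hj
    obtain ⟨z, hz1, hz2⟩ := (hsat j (hmem j hj)).1
    calc dist (c j) (c 0) ≤ dist (c j) z + dist z (c 0) := dist_triangle _ _ _
      _ ≤ r j + r 0 := add_le_add (by rw [dist_comm]; exact mem_closedBall.mp hz1)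
          (mem_closedBall.mp hz2)
  have hsub4 : ∀ k, V k ⊆ closedBall (c 0) (4 * r 0) := by
    intro k
    refine Set.iUnion₂_subset fun j hj => fun x hx => ?_
    have hrj := hrpos j hj
    have hrj0 := (hsat j (hmem j hj)).2
    have hxj : dist x (c j) ≤ (1+δ) * r j := by
      rw [dist_pi_le_iff (by nlinarith)]
      intro l
      obtain ⟨h1, h2⟩ := mem_Icc.mp (hx l)
      have h3 := hradle k j hj l
      rw [Real.dist_eq, abs_le]
      constructor <;> linarith
    rw [mem_closedBall]
    calc dist x (c 0) ≤ dist x (c j) + dist (c j) (c 0) := dist_triangle _ _ _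
      _ ≤ (1+δ) * r j + (r j + r 0) := add_le_add hxj (hdist0 j hj)
      _ ≤ 4 * r 0 := by nlinarith
  have hstep : ∀ k, k < m + 1 →
      volume (V (k+1) \ V k) ≤ ENNReal.ofReal δ * volume (closedBall (c 0) (4 * r 0)) := by
    intro k hk
    set i : Fin (m+1) := ⟨k, hk⟩ with hi
    have hupd : ∀ j ∈ Finset.range (N+1),
        rad (k+1) j = Function.update (rad k j) i ((1+δ) * rad k j i) := by
      intro j _
      funext l
      rw [Function.update_apply]
      by_cases hl : l = i
      · subst hl
        rw [if_pos rfl]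
        have hvi : (i : ℕ) = k := rfl
        simp only [hrad, hvi]
        rw [if_pos (Nat.lt_succ_self k), if_neg (lt_irrefl k)]
      · rw [if_neg hl]
        have hne : (l : ℕ) ≠ k := fun h => hl (Fin.ext h)
        simp only [hrad]
        exact if_congr (by omega) rfl rfl
    have hVk1 : V (k+1) = ⋃ j ∈ Finset.range (N+1),
        cube (c j) (Function.update (rad k j) i ((1+δ) * rad k j i)) :=
      Set.iUnion₂_congr fun j hj => by rw [hupd j hj]
    calc volume (V (k+1) \ V k)
        ≤ ENNReal.ofReal δ * volume (V k) := by
          rw [hVk1]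
          exact dilate_one_coord δ hδ0 i (Finset.range (N+1)) c (fun j => rad k j)
            (fun j hj l => hradnn k j hj l)
      _ ≤ ENNReal.ofReal δ * volume (closedBall (c 0) (4 * r 0)) :=
          mul_le_mul' le_rfl (measure_mono (hsub4 k))
  have htele : V (m+1) \ V 0 ⊆ ⋃ k ∈ Finset.range (m+1), (V (k+1) \ V k) := by
    rintro x ⟨hxn, hx0⟩
    by_contra hcon
    have hnot : ∀ k, k < m + 1 → x ∈ V (k+1) → x ∈ V k := by
      intro k hk hxk
      by_contra hxk'
      exact hcon (Set.mem_iUnion₂.mpr ⟨k, Finset.mem_range.mpr hk, hxk, hxk'⟩)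
    have hall : ∀ k, k ≤ m + 1 → x ∉ V k := by
      intro k
      induction k with
      | zero => exact fun _ => hx0
      | succ k ih =>
        intro hk hxk
        exact ih (by omega) (hnot k (by omega) hxk)
    exact hall (m+1) le_rfl hxn
  calc volume ((⋃ j ∈ Finset.range (N+1), closedBall (c j) ((1 + δ) * r j)) \
          ⋃ j ∈ Finset.range (N+1), closedBall (c j) (r j))
      = volume (V (m+1) \ V 0) := by rw [hV0, hVn]
    _ ≤ volume (⋃ k ∈ Finset.range (m+1), (V (k+1) \ V k)) := measure_mono htele
    _ ≤ ∑ k ∈ Finset.range (m+1), volume (V (k+1) \ V k) :=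
        measure_biUnion_finset_le _ _
    _ ≤ ∑ _k ∈ Finset.range (m+1), ENNReal.ofReal δ * volume (closedBall (c 0) (4 * r 0)) :=
        Finset.sum_le_sum fun k hk => hstep k (Finset.mem_range.mp hk)
    _ = (m+1 : ℝ≥0∞) * (ENNReal.ofReal δ * volume (closedBall (c 0) (4 * r 0))) := by
        rw [Finset.sum_const, Finset.card_range, nsmul_eq_mul]
        norm_cast
    _ = ENNReal.ofReal ((m+1 : ℝ) * δ) * volume (closedBall (c 0) (4 * r 0)) := by
        rw [ENNReal.ofReal_mul (by positivity), ← mul_assoc,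
          show ((m : ℝ) + 1) = ((m + 1 : ℕ) : ℝ) by push_cast; ring, ENNReal.ofReal_natCast,
          Nat.cast_add, Nat.cast_one]

/-- Let w be a weight on ℝⁿ satisfying the A_∞-type growth bound
w(S)/w(Q) ≤ 2 (|S|/|Q|)^{1/β} (β > 1) and having doubling constant Δ.  If {Q_j} is a
satellite configuration of cubes with center Q₀ then for all δ ∈ (0,1),
w((⋃ (1+δ)Q_j) \ (⋃ Q_j)) ≤ C_n Δ² δ^{1/β} w(Q₀), with C_n depending only on n. -/
theorem weighted_satellite_enlargement (n : ℕ) :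
    ∃ C : ℝ, 0 < C ∧
      ∀ (w : (Fin n → ℝ) → ℝ≥0∞), Measurable w →
      ∀ β : ℝ, 1 < β →
      ∀ Δ : ℝ, 0 < Δ →
      (∀ (c : Fin n → ℝ) (r : ℝ), 0 < r →
        weightMeasure n w (closedBall c (2 * r)) ≤
          ENNReal.ofReal Δ * weightMeasure n w (closedBall c r)) →
      (∀ (c : Fin n → ℝ) (r : ℝ), 0 < r → ∀ S ⊆ closedBall c r, MeasurableSet S →
        weightMeasure n w S ≤
          2 * (volume S / volume (closedBall c r)) ^ (1 / β) *
            weightMeasure n w (closedBall c r)) →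
      ∀ (N : ℕ) (c : ℕ → (Fin n → ℝ)) (r : ℕ → ℝ),
        (∀ j ≤ N, 0 < r j) →
        (∀ j ≤ N, (closedBall (c j) (r j) ∩ closedBall (c 0) (r 0)).Nonempty ∧ r j ≤ r 0) →
        ∀ δ : ℝ, 0 < δ → δ < 1 →
          weightMeasure n w
              ((⋃ j ∈ Finset.range (N + 1), closedBall (c j) ((1 + δ) * r j)) \
                ⋃ j ∈ Finset.range (N + 1), closedBall (c j) (r j)) ≤
            ENNReal.ofReal (C * Δ ^ 2 * δ ^ (1 / β)) *
              weightMeasure n w (closedBall (c 0) (r 0)) := by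
  obtain rfl | ⟨m, rfl⟩ : n = 0 ∨ ∃ m, n = m + 1 := by
    cases n
    · exact Or.inl rfl
    · exact Or.inr ⟨_, rfl⟩
  · -- n = 0 : the set in question is empty
    refine ⟨1, one_pos, ?_⟩
    intro w hw β hβ Δ hΔ hdouble hgrowth N c r hr hsat δ hδ0 hδ1
    have huniv : (⋃ j ∈ Finset.range (N+1), closedBall (c j) (r j)) = univ := by
      apply Set.eq_univ_of_univ_subset
      refine Set.Subset.trans ?_
        (finset_subset_biUnion (Finset.range (N+1)) (fun j => closedBall (c j) (r j))
          (Finset.mem_range.mpr (Nat.succ_pos N)))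
      intro x _
      rw [mem_closedBall, show x = c 0 from Subsingleton.elim _ _, dist_self]
      exact (hr 0 (Nat.zero_le N)).le
    rw [huniv, Set.diff_univ, measure_empty]
    exact zero_le
  · -- n = m + 1
    refine ⟨2 * ((m:ℝ) + 1) + 2, by positivity, ?_⟩
    intro w hw β hβ Δ hΔ hdouble hgrowth N c r hr hsat δ hδ0 hδ1
    have hrpos : 0 < r 0 := hr 0 (Nat.zero_le N)
    set E := (⋃ j ∈ Finset.range (N + 1), closedBall (c j) ((1 + δ) * r j)) \
        ⋃ j ∈ Finset.range (N + 1), closedBall (c j) (r j) with hE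
    have hEmeas : MeasurableSet E := by
      apply MeasurableSet.diff <;>
        exact MeasurableSet.biUnion (Finset.range (N+1)).countable_toSet
          (fun j _ => measurableSet_closedBall)
    have hEsub : E ⊆ closedBall (c 0) (4 * r 0) := by
      rintro x ⟨hx1, _⟩
      obtain ⟨j, hj, hxj⟩ := Set.mem_iUnion₂.mp hx1
      have hjN : j ≤ N := Nat.lt_succ_iff.mp (Finset.mem_range.mp hj)
      have h1 : dist x (c j) ≤ (1+δ) * r j := mem_closedBall.mp hxj
      obtain ⟨⟨z, hz1, hz2⟩, hrle⟩ := hsat j hjN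
      have h2 : dist (c j) (c 0) ≤ r j + r 0 := by
        calc dist (c j) (c 0) ≤ dist (c j) z + dist z (c 0) := dist_triangle _ _ _
          _ ≤ r j + r 0 := add_le_add (by rw [dist_comm]; exact mem_closedBall.mp hz1)
              (mem_closedBall.mp hz2)
      have h3 := dist_triangle x (c j) (c 0)
      have h4 := hr j hjN
      rw [mem_closedBall]
      nlinarith
    have hleb := lebesgue_satellite N c r δ hδ0 hδ1 hr hsat
    have hratio : volume E / volume (closedBall (c 0) (4 * r 0)) ≤
        ENNReal.ofReal ((m+1 : ℝ) * δ) :=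
      ENNReal.div_le_of_le_mul hleb
    have hgrow := hgrowth (c 0) (4 * r 0) (by positivity) E hEsub hEmeas
    have hd1 := hdouble (c 0) (2 * r 0) (by positivity)
    rw [show (2 : ℝ) * (2 * r 0) = 4 * r 0 by ring] at hd1
    have hd2 := hdouble (c 0) (r 0) hrpos
    have hrpow : (ENNReal.ofReal ((m+1 : ℝ) * δ)) ^ (1/β) =
        ENNReal.ofReal (((m+1 : ℝ) * δ) ^ (1/β)) :=
      ENNReal.ofReal_rpow_of_pos (by positivity)
    have hβ0 : (0:ℝ) < 1/β := by positivity
    have hcoef : (2 : ℝ≥0∞) * ENNReal.ofReal (((m+1 : ℝ) * δ) ^ (1/β)) *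
        (ENNReal.ofReal Δ * ENNReal.ofReal Δ) ≤
          ENNReal.ofReal ((2 * ((m:ℝ) + 1) + 2) * Δ ^ 2 * δ ^ (1/β)) := by
      rw [← ENNReal.ofReal_mul hΔ.le, ← ENNReal.ofReal_ofNat 2,
        ← ENNReal.ofReal_mul (by norm_num), ← ENNReal.ofReal_mul (by positivity)]
      apply ENNReal.ofReal_le_ofReal
      have hmul : ((m+1 : ℝ) * δ) ^ (1/β) = (m+1 : ℝ) ^ (1/β) * δ ^ (1/β) :=
        Real.mul_rpow (by positivity) hδ0.le
      have h2 : (m+1 : ℝ) ^ (1/β) ≤ (m+1 : ℝ) := by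
        nth_rewrite 2 [← Real.rpow_one ((m:ℝ)+1)]
        apply Real.rpow_le_rpow_of_exponent_le (by linarith [Nat.cast_nonneg (α := ℝ) m])
        rw [div_le_one (by linarith)]
        linarith
      have h3 : (0:ℝ) ≤ δ ^ (1/β) := Real.rpow_nonneg hδ0.le _
      have h4 : (0:ℝ) ≤ (m+1 : ℝ) ^ (1/β) := Real.rpow_nonneg (by positivity) _
      rw [hmul]
      nlinarith [sq_nonneg Δ, hΔ.le, mul_le_mul_of_nonneg_right h2 h3]
    calc weightMeasure (m+1) w E
        ≤ 2 * (volume E / volume (closedBall (c 0) (4 * r 0))) ^ (1/β) *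
            weightMeasure (m+1) w (closedBall (c 0) (4 * r 0)) := hgrow
      _ ≤ 2 * ENNReal.ofReal (((m+1 : ℝ) * δ) ^ (1/β)) *
            (ENNReal.ofReal Δ * (ENNReal.ofReal Δ *
              weightMeasure (m+1) w (closedBall (c 0) (r 0)))) := by
          refine mul_le_mul' (mul_le_mul' le_rfl ?_) ?_
          · rw [← hrpow]
            exact ENNReal.rpow_le_rpow hratio hβ0.le
          · exact le_trans hd1 (mul_le_mul' le_rfl hd2)
      _ = (2 * ENNReal.ofReal (((m+1 : ℝ) * δ) ^ (1/β)) *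
            (ENNReal.ofReal Δ * ENNReal.ofReal Δ)) *
              weightMeasure (m+1) w (closedBall (c 0) (r 0)) := by ring
      _ ≤ ENNReal.ofReal ((2 * ((m:ℝ) + 1) + 2) * Δ ^ 2 * δ ^ (1/β)) *
            weightMeasure (m+1) w (closedBall (c 0) (r 0)) :=
          mul_le_mul_left hcoef _
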